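/- For all x ∈ (0,1), x^(α(x-1) - γ) < Γ(x) < x^(β(x-1) - γ), where α = 1 - γ and β = (π²/6 - γ)/2, and these constants are best possible. -/

import Mathlib

open Real Set

namespace AlzerAux

open Filter Topology Finset

local notation "γ" => Real.eulerMascheroniConstant

noncomputable def f0 (n : ℕ) (x : ℝ) : ℝ := x / (n + 1) - Real.log (1 + x / (n + 1))
noncomputable def f1 (n : ℕ) (x : ℝ) : ℝ := 1 / (n + 1) - 1 / (n + 1 + x)
noncomputable def f2 (n : ℕ) (x : ℝ) : ℝ := 1 / (n + 1 + x) ^ 2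
noncomputable def f3 (n : ℕ) (x : ℝ) : ℝ := -2 / (n + 1 + x) ^ 3
noncomputable def f4 (n : ℕ) (x : ℝ) : ℝ := 6 / (n + 1 + x) ^ 4

noncomputable def T0 (x : ℝ) : ℝ := ∑' n, f0 n x
noncomputable def T1 (x : ℝ) : ℝ := ∑' n, f1 n x
noncomputable def T2 (x : ℝ) : ℝ := ∑' n, f2 n x
noncomputable def T3 (x : ℝ) : ℝ := ∑' n, f3 n x
noncomputable def T4 (x : ℝ) : ℝ := ∑' n, f4 n x

lemma log_add_one_le {t : ℝ} (ht : 0 ≤ t) : Real.log (1 + t) ≤ t := by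
  have := Real.log_le_sub_one_of_pos (x := 1 + t) (by linarith)
  linarith

lemma le_log_add_one {t : ℝ} (ht : 0 ≤ t) : t / (1 + t) ≤ Real.log (1 + t) := by
  have h1 : (0:ℝ) < 1 + t := by linarith
  have := Real.log_le_sub_one_of_pos (x := (1 + t)⁻¹) (by positivity)
  rw [Real.log_inv] at this
  have h2 : (1 + t)⁻¹ - 1 = -(t / (1+t)) := by field_simp; ring
  rw [h2] at this
  linarith

lemma sub_log_le_sq {t : ℝ} (ht : 0 ≤ t) : t - Real.log (1 + t) ≤ t ^ 2 := by
  have h1 := le_log_add_one ht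
  have h2 : (0:ℝ) < 1 + t := by linarith
  have : t - t / (1 + t) = t ^ 2 / (1 + t) := by field_simp; ring
  have h3 : t ^ 2 / (1 + t) ≤ t ^ 2 := by
    apply div_le_self (by positivity) (by linarith)
  linarith

lemma f0_nonneg (n : ℕ) {x : ℝ} (hx : 0 ≤ x) : 0 ≤ f0 n x := by
  have hc : (0:ℝ) < (n:ℝ) + 1 := by positivity
  have ht : 0 ≤ x / ((n:ℝ)+1) := by positivity
  have := log_add_one_le ht
  simpa [f0] using this

lemma f0_le (n : ℕ) {x : ℝ} (hx : 0 ≤ x) : f0 n x ≤ x ^ 2 * (1 / ((n:ℝ)+1) ^ 2) := by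
  have hc : (0:ℝ) < (n:ℝ) + 1 := by positivity
  have ht : 0 ≤ x / ((n:ℝ)+1) := by positivity
  have := sub_log_le_sq ht
  have h2 : (x / ((n:ℝ)+1)) ^ 2 = x ^ 2 * (1 / ((n:ℝ)+1) ^ 2) := by field_simp
  rw [h2] at this
  simpa [f0] using this

lemma summable_base : Summable (fun n : ℕ => 1 / ((n:ℝ)+1) ^ 2) := by
  have h : Summable (fun n : ℕ => 1 / ((n:ℝ)) ^ 2) := summable_one_div_nat_pow.mpr one_lt_two
  have := (summable_nat_add_iff 1).mpr h
  refine this.congr fun n => ?_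
  push_cast
  ring_nf

lemma hasSum_base : HasSum (fun n : ℕ => 1 / ((n:ℝ)+1) ^ 2) (π ^ 2 / 6) := by
  have h := (hasSum_nat_add_iff' (f := fun n : ℕ => (1:ℝ) / (n:ℝ) ^ 2) 1).mpr hasSum_zeta_two
  simp only [Finset.range_one, Finset.sum_singleton, Nat.cast_zero] at h
  norm_num at h
  refine h.congr_fun fun n => ?_
  push_cast
  ring_nf

lemma hasSum_base2 : HasSum (fun n : ℕ => 1 / ((n:ℝ)+2) ^ 2) (π ^ 2 / 6 - 1) := by
  have h := (hasSum_nat_add_iff' (f := fun n : ℕ => (1:ℝ) / ((n:ℝ)+1) ^ 2) 1).mpr hasSum_base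
  simp only [Finset.range_one, Finset.sum_singleton, Nat.cast_zero] at h
  norm_num at h
  refine h.congr_fun fun n => ?_
  push_cast
  ring_nf

lemma summable_f0 {x : ℝ} (hx : 0 ≤ x) : Summable fun n => f0 n x :=
  Summable.of_nonneg_of_le (fun n => f0_nonneg n hx) (fun n => f0_le n hx)
    ((summable_base.mul_left (x ^ 2)))



lemma sum_f0_eq {x : ℝ} (hx : 0 < x) (N : ℕ) :
    ∑ n ∈ Finset.range N, f0 n x
      = x * ((harmonic N : ℝ) - Real.log N) + Real.log x
        + Real.BohrMollerup.logGammaSeq x N := by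
  have hc : ∀ n : ℕ, (0:ℝ) < (n:ℝ) + 1 := fun n => by positivity
  have hxc : ∀ n : ℕ, (0:ℝ) < x + ((n:ℝ) + 1) := fun n => by positivity
  have hsplit : ∑ n ∈ Finset.range N, f0 n x
      = (∑ n ∈ Finset.range N, x / ((n:ℝ)+1))
        - ∑ n ∈ Finset.range N, Real.log (1 + x / ((n:ℝ)+1)) := by
    rw [← Finset.sum_sub_distrib]; rfl
  have h1 : ∑ n ∈ Finset.range N, x / ((n:ℝ)+1) = x * (harmonic N : ℝ) := by
    rw [harmonic]
    push_cast
    rw [Finset.mul_sum]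
    refine Finset.sum_congr rfl fun n _ => ?_
    rw [div_eq_mul_inv]
  have h2 : ∑ n ∈ Finset.range N, Real.log (1 + x / ((n:ℝ)+1))
      = (∑ n ∈ Finset.range N, Real.log (x + ((n:ℝ)+1)))
        - ∑ n ∈ Finset.range N, Real.log ((n:ℝ)+1) := by
    rw [← Finset.sum_sub_distrib]
    refine Finset.sum_congr rfl fun n _ => ?_
    rw [← Real.log_div (hxc n).ne' (hc n).ne']
    congr 1
    field_simp
    ring
  have h3 : ∑ m ∈ Finset.range (N+1), Real.log (x + (m:ℝ))
      = (∑ n ∈ Finset.range N, Real.log (x + ((n:ℝ)+1))) + Real.log x := by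
    rw [Finset.sum_range_succ']
    push_cast
    norm_num
  have h4 : ∑ n ∈ Finset.range N, Real.log ((n:ℝ)+1) = Real.log (N.factorial : ℝ) := by
    rw [← Real.log_prod (fun n _ => (hc n).ne')]
    congr 1
    rw [← Finset.prod_range_add_one_eq_factorial N]
    push_cast
    rfl
  rw [hsplit, h1, h2, h4, Real.BohrMollerup.logGammaSeq]
  have h5 : ∑ n ∈ Finset.range N, Real.log (x + ((n:ℝ)+1))
      = (∑ m ∈ Finset.range (N+1), Real.log (x + (m:ℝ))) - Real.log x := by
    rw [h3]; ring
  rw [h5]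
  ring

lemma hasSum_f0 {x : ℝ} (hx : 0 < x) :
    HasSum (fun n => f0 n x)
      (Real.log (Real.Gamma x) + Real.log x + γ * x) := by
  have hsumm := summable_f0 hx.le
  have h1 : Tendsto (fun N => ∑ n ∈ Finset.range N, f0 n x) atTop (𝓝 (∑' n, f0 n x)) :=
    hsumm.hasSum.tendsto_sum_nat
  have h2 : Tendsto
      (fun N : ℕ => x * ((harmonic N : ℝ) - Real.log N) + Real.log x
        + Real.BohrMollerup.logGammaSeq x N) atTop
      (𝓝 (x * γ + Real.log x + Real.log (Real.Gamma x))) := by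
    exact ((Real.tendsto_harmonic_sub_log.const_mul x).add_const (Real.log x)).add
      (Real.BohrMollerup.tendsto_log_gamma hx)
  have h1' : Tendsto (fun N => ∑ n ∈ Finset.range N, f0 n x) atTop
      (𝓝 (x * γ + Real.log x + Real.log (Real.Gamma x))) := by
    refine h2.congr fun N => (sum_f0_eq hx N).symm
  have := tendsto_nhds_unique h1 h1'
  have heq : Real.log (Real.Gamma x) + Real.log x + γ * x
      = x * γ + Real.log x + Real.log (Real.Gamma x) := by ring
  rw [heq, ← this]
  exact hsumm.hasSum

lemma T0_eq {x : ℝ} (hx : 0 < x) :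
    T0 x = Real.log (Real.Gamma x) + Real.log x + γ * x :=
  (hasSum_f0 hx).tsum_eq

lemma T0_one : T0 1 = γ := by
  rw [T0_eq one_pos]
  simp [Real.Gamma_one]

lemma T0_nonneg {x : ℝ} (hx : 0 ≤ x) : 0 ≤ T0 x :=
  tsum_nonneg fun n => f0_nonneg n hx

lemma T0_le {x : ℝ} (hx : 0 ≤ x) : T0 x ≤ x ^ 2 * (π ^ 2 / 6) := by
  have h := Summable.tsum_le_tsum (fun n => f0_le n hx) (summable_f0 hx)
    (summable_base.mul_left (x^2))
  calc T0 x ≤ ∑' n : ℕ, x ^ 2 * (1 / ((n:ℝ)+1)^2) := h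
    _ = x ^ 2 * (π ^ 2 / 6) := by rw [(hasSum_base.mul_left (x^2)).tsum_eq]

lemma denom_pos (n : ℕ) {x : ℝ} (hx : 0 < x) : (0:ℝ) < (n:ℝ) + 1 + x := by positivity

lemma one_le_denom (n : ℕ) {x : ℝ} (hx : 0 < x) : ((n:ℝ) + 1) ≤ (n:ℝ) + 1 + x := by linarith

lemma hasDerivAt_f0 (n : ℕ) {x : ℝ} (hx : 0 < x) : HasDerivAt (f0 n) (f1 n x) x := by
  have hc : (0:ℝ) < (n:ℝ) + 1 := by positivity
  have hu : (0:ℝ) < 1 + x / ((n:ℝ)+1) := by positivity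
  have h1 : HasDerivAt (fun y : ℝ => y / ((n:ℝ)+1)) (1 / ((n:ℝ)+1)) x := by
    simpa using (hasDerivAt_id x).div_const ((n:ℝ)+1)
  have h2 : HasDerivAt (fun y : ℝ => 1 + y / ((n:ℝ)+1)) (1 / ((n:ℝ)+1)) x := by
    simpa using h1.const_add 1
  have h3 : HasDerivAt (fun y : ℝ => Real.log (1 + y / ((n:ℝ)+1)))
      ((1 / ((n:ℝ)+1)) / (1 + x / ((n:ℝ)+1))) x := h2.log hu.ne'
  have := h1.sub h3
  refine this.congr_deriv ?_
  unfold f1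
  field_simp

lemma hasDerivAt_f1 (n : ℕ) {x : ℝ} (hx : 0 < x) : HasDerivAt (f1 n) (f2 n x) x := by
  have hd := denom_pos n hx
  have h1 : HasDerivAt (fun y : ℝ => (n:ℝ) + 1 + y) 1 x := by
    simpa using (hasDerivAt_id x).const_add ((n:ℝ)+1)
  have h2 : HasDerivAt (fun y : ℝ => ((n:ℝ) + 1 + y)⁻¹) (-(1 / ((n:ℝ)+1+x) ^ 2)) x := by
    have := h1.inv hd.ne'
    refine this.congr_deriv ?_
    field_simp
  have h3 : HasDerivAt (f1 n) (0 - -(1 / ((n:ℝ)+1+x) ^ 2)) x := by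
    refine HasDerivAt.sub ?_ ?_
    · exact hasDerivAt_const x _
    · simpa [one_div] using h2
  simpa [f2] using h3

lemma hasDerivAt_f2 (n : ℕ) {x : ℝ} (hx : 0 < x) : HasDerivAt (f2 n) (f3 n x) x := by
  have hd := denom_pos n hx
  have h1 : HasDerivAt (fun y : ℝ => (n:ℝ) + 1 + y) 1 x := by
    simpa using (hasDerivAt_id x).const_add ((n:ℝ)+1)
  have h2 : HasDerivAt (fun y : ℝ => ((n:ℝ) + 1 + y) ^ 2) (2 * ((n:ℝ)+1+x)) x := by
    have := h1.pow 2
    refine this.congr_deriv ?_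
    ring
  have h3 := h2.inv (by positivity)
  have : HasDerivAt (fun y : ℝ => (((n:ℝ) + 1 + y) ^ 2)⁻¹)
      (-2 / ((n:ℝ)+1+x) ^ 3) x := by
    refine h3.congr_deriv ?_
    field_simp
  have heq : f2 n = fun y : ℝ => (((n:ℝ) + 1 + y) ^ 2)⁻¹ := by
    funext y; simp [f2, one_div]
  have heq2 : f3 n x = -2 / ((n:ℝ)+1+x) ^ 3 := rfl
  rw [heq, heq2]
  exact this

lemma hasDerivAt_f3 (n : ℕ) {x : ℝ} (hx : 0 < x) : HasDerivAt (f3 n) (f4 n x) x := by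
  have hd := denom_pos n hx
  have h1 : HasDerivAt (fun y : ℝ => (n:ℝ) + 1 + y) 1 x := by
    simpa using (hasDerivAt_id x).const_add ((n:ℝ)+1)
  have h2 : HasDerivAt (fun y : ℝ => ((n:ℝ) + 1 + y) ^ 3) (3 * ((n:ℝ)+1+x) ^ 2) x := by
    have := h1.pow 3
    refine this.congr_deriv ?_
    ring
  have h3 := h2.inv (by positivity)
  have h4 : HasDerivAt (fun y : ℝ => (-2 : ℝ) * (((n:ℝ) + 1 + y) ^ 3)⁻¹)
      ((-2) * (-(3 * ((n:ℝ)+1+x) ^ 2) / (((n:ℝ)+1+x) ^ 3) ^ 2)) x := h3.const_mul (-2)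
  have heq : f3 n = fun y : ℝ => (-2 : ℝ) * (((n:ℝ) + 1 + y) ^ 3)⁻¹ := by
    funext y; simp [f3]; ring
  rw [f4, heq]
  refine h4.congr_deriv ?_
  field_simp
  ring

lemma f1_nonneg (n : ℕ) {x : ℝ} (hx : 0 < x) : 0 ≤ f1 n x := by
  have hd := denom_pos n hx
  have hc : (0:ℝ) < (n:ℝ) + 1 := by positivity
  have := one_le_denom n hx
  unfold f1
  have h2 : 1 / ((n:ℝ)+1+x) ≤ 1 / ((n:ℝ)+1) := by
    apply one_div_le_one_div_of_le hc this
  linarith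

lemma f1_le (n : ℕ) {x : ℝ} (hx : 0 < x) (hx2 : x < 2) : f1 n x ≤ 2 / ((n:ℝ)+1) ^ 2 := by
  have hd := denom_pos n hx
  have hc : (0:ℝ) < (n:ℝ) + 1 := by positivity
  have heq : f1 n x = x / (((n:ℝ)+1) * ((n:ℝ)+1+x)) := by
    unfold f1; field_simp; ring
  rw [heq]
  rw [div_le_div_iff₀ (by positivity) (by positivity)]
  have h1 : ((n:ℝ)+1) ≤ (n:ℝ)+1+x := by linarith
  nlinarith [sq_nonneg ((n:ℝ)+1)]

lemma f2_nonneg (n : ℕ) {x : ℝ} (hx : 0 < x) : 0 ≤ f2 n x := by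
  have hd := denom_pos n hx
  unfold f2; positivity

lemma f2_le (n : ℕ) {x : ℝ} (hx : 0 < x) : f2 n x ≤ 1 / ((n:ℝ)+1) ^ 2 := by
  have hd := denom_pos n hx
  have hc : (0:ℝ) < (n:ℝ) + 1 := by positivity
  unfold f2
  apply one_div_le_one_div_of_le (by positivity)
  nlinarith [one_le_denom n hx]

lemma f2_antitone {n : ℕ} {a b : ℝ} (ha : 0 < a) (hab : a ≤ b) : f2 n b ≤ f2 n a := by
  have hd := denom_pos n ha
  unfold f2
  apply one_div_le_one_div_of_le (by positivity)
  nlinarith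

lemma f3_abs_le (n : ℕ) {x : ℝ} (hx : 0 < x) : |f3 n x| ≤ 2 / ((n:ℝ)+1) ^ 2 := by
  have hd := denom_pos n hx
  have hc : (0:ℝ) < (n:ℝ) + 1 := by positivity
  have h1 : |f3 n x| = 2 / ((n:ℝ)+1+x) ^ 3 := by
    rw [f3, abs_div, abs_neg]
    norm_num
    rw [abs_of_pos (by positivity)]
  rw [h1, div_le_div_iff₀ (by positivity) (by positivity)]
  have h2 := one_le_denom n hx
  have h3 : (1:ℝ) ≤ (n:ℝ)+1 := by
    have : (0:ℝ) ≤ (n:ℝ) := Nat.cast_nonneg n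
    linarith
  have hb : ((n:ℝ)+1)^2 ≤ ((n:ℝ)+1)^3 := by
    apply pow_le_pow_right₀ h3
    norm_num
  have hc3 : ((n:ℝ)+1)^3 ≤ ((n:ℝ)+1+x)^3 := by
    apply pow_le_pow_left₀ hc.le h2
  nlinarith

lemma f4_abs_le (n : ℕ) {x : ℝ} (hx : 0 < x) : |f4 n x| ≤ 6 / ((n:ℝ)+1) ^ 2 := by
  have hd := denom_pos n hx
  have hc : (0:ℝ) < (n:ℝ) + 1 := by positivity
  have h1 : |f4 n x| = 6 / ((n:ℝ)+1+x) ^ 4 := by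
    rw [f4, abs_div]
    norm_num
    rw [abs_of_pos (by positivity)]
  rw [h1, div_le_div_iff₀ (by positivity) (by positivity)]
  have h2 := one_le_denom n hx
  have h3 : (1:ℝ) ≤ (n:ℝ)+1 := by
    have : (0:ℝ) ≤ (n:ℝ) := Nat.cast_nonneg n
    linarith
  have hb : ((n:ℝ)+1)^2 ≤ ((n:ℝ)+1)^4 := by
    apply pow_le_pow_right₀ h3
    norm_num
  have hc4 : ((n:ℝ)+1)^4 ≤ ((n:ℝ)+1+x)^4 := by
    apply pow_le_pow_left₀ hc.le h2
  nlinarith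

lemma summable_f1 {x : ℝ} (hx : 0 < x) (hx2 : x < 2) : Summable fun n => f1 n x :=
  Summable.of_nonneg_of_le (fun n => f1_nonneg n hx) (fun n => f1_le n hx hx2)
    (summable_base.mul_left 2 |>.congr fun n => by ring)

lemma summable_f2 {x : ℝ} (hx : 0 < x) : Summable fun n => f2 n x :=
  Summable.of_nonneg_of_le (fun n => f2_nonneg n hx) (fun n => f2_le n hx) summable_base

lemma summable_f3 {x : ℝ} (hx : 0 < x) : Summable fun n => f3 n x := by
  apply Summable.of_norm_bounded (summable_base.mul_left 2 |>.congr
    (fun n : ℕ => by ring_nf : ∀ n : ℕ, 2 * (1/((n:ℝ)+1)^2) = 2/((n:ℝ)+1)^2))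
  intro n
  exact f3_abs_le n hx

lemma summable_f4 {x : ℝ} (hx : 0 < x) : Summable fun n => f4 n x := by
  apply Summable.of_norm_bounded (summable_base.mul_left 6 |>.congr
    (fun n : ℕ => by ring_nf : ∀ n : ℕ, 6 * (1/((n:ℝ)+1)^2) = 6/((n:ℝ)+1)^2))
  intro n
  exact f4_abs_le n hx

noncomputable def ub (n : ℕ) : ℝ := 6 / ((n:ℝ)+1) ^ 2

lemma summable_ub : Summable ub :=
  summable_base.mul_left 6 |>.congr fun n => by unfold ub; ring

lemma hasDerivAt_T0 {x : ℝ} (hx : x ∈ Ioo (0:ℝ) 2) : HasDerivAt T0 (T1 x) x := by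
  refine hasDerivAt_tsum_of_isPreconnected summable_ub isOpen_Ioo
    (convex_Ioo (0:ℝ) 2).isPreconnected
    (fun n y hy => hasDerivAt_f0 n hy.1) (fun n y hy => ?_)
    (show (1:ℝ) ∈ Ioo (0:ℝ) 2 by constructor <;> norm_num)
    (summable_f0 one_pos.le) hx
  rw [Real.norm_eq_abs, abs_of_nonneg (f1_nonneg n hy.1)]
  calc f1 n y ≤ 2 / ((n:ℝ)+1)^2 := f1_le n hy.1 hy.2
    _ ≤ ub n := by unfold ub; gcongr <;> norm_num

lemma hasDerivAt_T1 {x : ℝ} (hx : x ∈ Ioo (0:ℝ) 2) : HasDerivAt T1 (T2 x) x := by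
  refine hasDerivAt_tsum_of_isPreconnected summable_ub isOpen_Ioo
    (convex_Ioo (0:ℝ) 2).isPreconnected
    (fun n y hy => hasDerivAt_f1 n hy.1) (fun n y hy => ?_)
    (show (1:ℝ) ∈ Ioo (0:ℝ) 2 by constructor <;> norm_num)
    (summable_f1 one_pos one_lt_two) hx
  rw [Real.norm_eq_abs, abs_of_nonneg (f2_nonneg n hy.1)]
  calc f2 n y ≤ 1 / ((n:ℝ)+1)^2 := f2_le n hy.1
    _ ≤ ub n := by unfold ub; gcongr <;> norm_num

lemma hasDerivAt_T2 {x : ℝ} (hx : x ∈ Ioo (0:ℝ) 2) : HasDerivAt T2 (T3 x) x := by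
  refine hasDerivAt_tsum_of_isPreconnected summable_ub isOpen_Ioo
    (convex_Ioo (0:ℝ) 2).isPreconnected
    (fun n y hy => hasDerivAt_f2 n hy.1) (fun n y hy => ?_)
    (show (1:ℝ) ∈ Ioo (0:ℝ) 2 by constructor <;> norm_num)
    (summable_f2 one_pos) hx
  rw [Real.norm_eq_abs]
  calc |f3 n y| ≤ 2 / ((n:ℝ)+1)^2 := f3_abs_le n hy.1
    _ ≤ ub n := by unfold ub; gcongr <;> norm_num

lemma hasDerivAt_T3 {x : ℝ} (hx : x ∈ Ioo (0:ℝ) 2) : HasDerivAt T3 (T4 x) x := by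
  refine hasDerivAt_tsum_of_isPreconnected summable_ub isOpen_Ioo
    (convex_Ioo (0:ℝ) 2).isPreconnected
    (fun n y hy => hasDerivAt_f3 n hy.1) (fun n y hy => ?_)
    (show (1:ℝ) ∈ Ioo (0:ℝ) 2 by constructor <;> norm_num)
    (summable_f3 one_pos) hx
  rw [Real.norm_eq_abs]
  exact f4_abs_le n hy.1

lemma hasSum_f1_one : HasSum (fun n => f1 n 1) 1 := by
  have hsumm : Summable fun n => f1 n 1 := summable_f1 one_pos one_lt_two
  have h1 : Tendsto (fun N => ∑ n ∈ Finset.range N, f1 n 1) atTop (𝓝 (∑' n, f1 n 1)) :=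
    hsumm.hasSum.tendsto_sum_nat
  have hpart : ∀ N : ℕ, ∑ n ∈ Finset.range N, f1 n 1 = 1 - 1 / ((N:ℝ)+1) := by
    intro N
    have h := Finset.sum_range_sub' (f := fun i : ℕ => 1 / ((i:ℝ)+1)) N
    have h2 : ∑ n ∈ Finset.range N, f1 n 1
        = ∑ i ∈ Finset.range N, (1 / ((i:ℝ)+1) - 1 / ((↑(i+1):ℝ)+1)) := by
      refine Finset.sum_congr rfl fun n _ => ?_
      unfold f1
      push_cast
      norm_num
    rw [h2, h]
    norm_num
  have h2 : Tendsto (fun N : ℕ => 1 - 1 / ((N:ℝ)+1)) atTop (𝓝 1) := by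
    have : Tendsto (fun N : ℕ => 1 / ((N:ℝ)+1)) atTop (𝓝 0) :=
      tendsto_one_div_add_atTop_nhds_zero_nat
    simpa using (tendsto_const_nhds (x := (1:ℝ))).sub this
  have h1' : Tendsto (fun N => ∑ n ∈ Finset.range N, f1 n 1) atTop (𝓝 1) := by
    refine h2.congr fun N => (hpart N).symm
  have heq := tendsto_nhds_unique h1 h1'
  have := hsumm.hasSum
  rw [heq] at this
  exact this

lemma T1_one : T1 1 = 1 := hasSum_f1_one.tsum_eq

lemma hasSum_f2_one : HasSum (fun n => f2 n 1) (π ^ 2 / 6 - 1) := by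
  refine hasSum_base2.congr_fun fun n => ?_
  unfold f2
  norm_num
  ring_nf

lemma T2_one : T2 1 = π ^ 2 / 6 - 1 := hasSum_f2_one.tsum_eq

lemma T2_nonneg {x : ℝ} (hx : 0 < x) : 0 ≤ T2 x := tsum_nonneg fun n => f2_nonneg n hx

lemma T2_le {x : ℝ} (hx : 0 < x) : T2 x ≤ π ^ 2 / 6 := by
  have h := Summable.tsum_le_tsum (fun n => f2_le n hx) (summable_f2 hx) summable_base
  calc T2 x ≤ ∑' n : ℕ, 1 / ((n:ℝ)+1)^2 := h
    _ = π ^ 2 / 6 := hasSum_base.tsum_eq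

lemma T2_mono {a b : ℝ} (ha : 0 < a) (hab : a ≤ b) : T2 b ≤ T2 a :=
  Summable.tsum_le_tsum (fun n => f2_antitone ha hab) (summable_f2 (lt_of_lt_of_le ha hab))
    (summable_f2 ha)

-- numeric lemmas
lemma gamma_gt : (1/2 : ℝ) < γ := Real.one_half_lt_eulerMascheroniConstant
lemma gamma_lt : γ < (2/3 : ℝ) := Real.eulerMascheroniConstant_lt_two_thirds
lemma pisq_lb : (9.8596 : ℝ) ≤ π ^ 2 := by nlinarith [Real.pi_gt_d2, Real.pi_pos]
lemma pisq_ub : π ^ 2 ≤ (9.9225 : ℝ) := by nlinarith [Real.pi_lt_d2, Real.pi_pos]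

noncomputable def B : ℝ := (π ^ 2 / 6 - γ) / 2
noncomputable def c0 : ℝ := B - 1 + γ

lemma B_pos : 0 < B := by
  have := gamma_lt; have := pisq_lb; unfold B; nlinarith
lemma c0_pos : 0 < c0 := by
  have := gamma_gt; have := pisq_lb; unfold c0 B; nlinarith
lemma c0_big : π ^ 2 / 216 < c0 := by
  have := gamma_gt; have := pisq_lb; have := pisq_ub; unfold c0 B; nlinarith

-- w and its positivity statements
noncomputable def w (x : ℝ) : ℝ := x * T2 x - (1 - γ)
noncomputable def w1 (x : ℝ) : ℝ := T2 x + x * T3 x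

lemma hasDerivAt_w {x : ℝ} (hx : x ∈ Ioo (0:ℝ) 2) : HasDerivAt w (w1 x) x := by
  have h := (hasDerivAt_id x).mul (hasDerivAt_T2 hx)
  have h2 := ((hasDerivAt_id x).mul (hasDerivAt_T2 hx)).sub_const (1 - γ)
  have : HasDerivAt w (1 * T2 x + x * T3 x) x := by
    have h3 := (hasDerivAt_T2 hx)
    exact ((hasDerivAt_id x).mul h3).sub_const (1 - γ)
  simpa [w1] using this

lemma w1_pos {x : ℝ} (hx : 0 < x) (hx1 : x ≤ 1) : 0 < w1 x := by
  have hsum : HasSum (fun n => f2 n x + x * f3 n x) (T2 x + x * T3 x) :=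
    (summable_f2 hx).hasSum.add (((summable_f3 hx).hasSum.mul_left x))
  have hterm : ∀ n : ℕ, 0 ≤ f2 n x + x * f3 n x := by
    intro n
    have hd := denom_pos n hx
    have heq : f2 n x + x * f3 n x = ((n:ℝ) + 1 - x) / ((n:ℝ)+1+x)^3 := by
      unfold f2 f3
      field_simp
      ring
    rw [heq]
    apply div_nonneg _ (by positivity)
    have : (0:ℝ) ≤ (n:ℝ) := Nat.cast_nonneg n
    linarith
  have hterm1 : 0 < f2 1 x + x * f3 1 x := by
    have hd := denom_pos 1 hx
    have heq : f2 1 x + x * f3 1 x = ((1:ℝ) + 1 - x) / ((1:ℝ)+1+x)^3 := by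
      unfold f2 f3
      push_cast
      field_simp
      ring
    rw [heq]
    apply div_pos (by linarith) (by positivity)
  have := Summable.tsum_pos hsum.summable hterm 1 hterm1
  rw [hsum.tsum_eq] at this
  exact this

lemma w_strictMono : StrictMonoOn w (Ioc (0:ℝ) 1) := by
  apply strictMonoOn_of_deriv_pos (convex_Ioc 0 1)
  · intro y hy
    exact (hasDerivAt_w ⟨hy.1, lt_of_le_of_lt hy.2 one_lt_two⟩).continuousAt.continuousWithinAt
  · intro y hy
    rw [interior_Ioc] at hy
    rw [(hasDerivAt_w ⟨hy.1, lt_trans hy.2 one_lt_two⟩).deriv]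
    exact w1_pos hy.1 hy.2.le

lemma w_fifth_neg : w (1/5) < 0 := by
  have h1 : T2 (1/5) ≤ π ^ 2 / 6 := T2_le (by norm_num)
  have h2 := gamma_lt
  have h3 := pisq_ub
  have h4 : (0:ℝ) < 1/5 := by norm_num
  unfold w
  nlinarith [T2_nonneg h4]

lemma w_one_pos : 0 < w 1 := by
  unfold w
  rw [T2_one]
  have := gamma_gt
  have := pisq_lb
  nlinarith

noncomputable def q (x : ℝ) : ℝ := B * x + c0 - x ^ 2 * T2 x
noncomputable def q1 (x : ℝ) : ℝ := B - (2 * x * T2 x + x ^ 2 * T3 x)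
noncomputable def q2 (x : ℝ) : ℝ := -(2 * T2 x + 4 * x * T3 x + x ^ 2 * T4 x)

lemma hasDerivAt_sq {x : ℝ} : HasDerivAt (fun y : ℝ => y ^ 2) (2 * x) x := by
  simpa using hasDerivAt_pow 2 x

lemma hasDerivAt_q {x : ℝ} (hx : x ∈ Ioo (0:ℝ) 2) : HasDerivAt q (q1 x) x := by
  have h1 : HasDerivAt (fun y : ℝ => y ^ 2 * T2 y) (2 * x * T2 x + x ^ 2 * T3 x) x :=
    hasDerivAt_sq.mul (hasDerivAt_T2 hx)
  have h2 : HasDerivAt (fun y : ℝ => B * y + c0) B x := by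
    simpa using ((hasDerivAt_id x).const_mul B).add_const c0
  exact h2.sub h1

lemma hasDerivAt_q1 {x : ℝ} (hx : x ∈ Ioo (0:ℝ) 2) : HasDerivAt q1 (q2 x) x := by
  have h1 : HasDerivAt (fun y : ℝ => 2 * y * T2 y) (2 * T2 x + 2 * x * T3 x) x := by
    have := ((hasDerivAt_id x).const_mul 2).mul (hasDerivAt_T2 hx)
    refine this.congr_deriv ?_
    simp [id]
  have h2 : HasDerivAt (fun y : ℝ => y ^ 2 * T3 y) (2 * x * T3 x + x ^ 2 * T4 x) x :=
    hasDerivAt_sq.mul (hasDerivAt_T3 hx)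
  have h3 := (h1.add h2).const_sub B
  have heq : q1 = fun y : ℝ => B - (2 * y * T2 y + y ^ 2 * T3 y) := rfl
  rw [heq]
  refine h3.congr_deriv ?_
  unfold q2
  ring

noncomputable def gq (n : ℕ) (x : ℝ) : ℝ := 2 * f2 n x + 4 * x * f3 n x + x ^ 2 * f4 n x

lemma gq_eq (n : ℕ) {x : ℝ} (hx : 0 < x) :
    gq n x = 2 * ((n:ℝ)+1) * ((n:ℝ)+1-2*x) / ((n:ℝ)+1+x) ^ 4 := by
  have hd := denom_pos n hx
  unfold gq f2 f3 f4
  field_simp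
  ring

lemma hasSum_gq {x : ℝ} (hx : 0 < x) :
    HasSum (fun n => gq n x) (2 * T2 x + 4 * x * T3 x + x ^ 2 * T4 x) := by
  have h2 := (summable_f2 hx).hasSum.mul_left 2
  have h3 := (summable_f3 hx).hasSum.mul_left (4 * x)
  have h4 := (summable_f4 hx).hasSum.mul_left (x ^ 2)
  have := (h2.add h3).add h4
  refine this.congr_fun fun n => ?_
  unfold gq
  ring

lemma gq_nonneg (n : ℕ) {x : ℝ} (hx : 0 < x) (hx1 : x ≤ 1) (hn : 1 ≤ n) : 0 ≤ gq n x := by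
  rw [gq_eq n hx]
  have hd := denom_pos n hx
  apply div_nonneg _ (by positivity)
  have h1 : (1:ℝ) ≤ (n:ℝ) := by exact_mod_cast hn
  nlinarith

lemma gq_lb (n : ℕ) (hn : 1 ≤ n) {x : ℝ} (hx : 0 < x) (hx1 : x ≤ 1) :
    2 * ((n:ℝ)+1) * ((n:ℝ)-1) / ((n:ℝ)+2) ^ 4 ≤ gq n x := by
  rw [gq_eq n hx]
  have hd := denom_pos n hx
  have h1 : (1:ℝ) ≤ (n:ℝ) := by exact_mod_cast hn
  have hnum : (0:ℝ) ≤ 2 * ((n:ℝ)+1) * ((n:ℝ)-1) := by nlinarith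
  have hnum2 : 2 * ((n:ℝ)+1) * ((n:ℝ)-1) ≤ 2 * ((n:ℝ)+1) * ((n:ℝ)+1-2*x) := by nlinarith
  have hden : ((n:ℝ)+1+x) ^ 4 ≤ ((n:ℝ)+2) ^ 4 := by
    apply pow_le_pow_left₀ hd.le
    linarith
  exact div_le_div₀ (by nlinarith) hnum2 (by positivity) hden

lemma gq0_lb {x : ℝ} (hx : 0 < x) (hx1 : x ≤ 1) : -(1/8 : ℝ) ≤ gq 0 x := by
  rw [gq_eq 0 hx]
  have hd : (0:ℝ) < 1 + x := by linarith
  have h2 : ((0:ℕ):ℝ) + 1 + x = 1 + x := by norm_num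
  have h3 : 2 * (((0:ℕ):ℝ)+1) * (((0:ℕ):ℝ)+1-2*x) = 2 * (1 - 2*x) := by norm_num
  rw [h2, h3, le_div_iff₀ (by positivity)]
  nlinarith [sq_nonneg ((x-1)*(x+3)), sq_nonneg (x-1)]

lemma sum9_pos {x : ℝ} (hx : 0 < x) (hx1 : x ≤ 1) :
    0 < ∑ n ∈ Finset.range 9, gq n x := by
  have e0 := gq0_lb hx hx1
  have e2 := gq_lb 2 (by norm_num) hx hx1
  have e3 := gq_lb 3 (by norm_num) hx hx1
  have e4 := gq_lb 4 (by norm_num) hx hx1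
  have e5 := gq_lb 5 (by norm_num) hx hx1
  have e6 := gq_lb 6 (by norm_num) hx hx1
  have e7 := gq_lb 7 (by norm_num) hx hx1
  have e8 := gq_lb 8 (by norm_num) hx hx1
  have e1 := gq_nonneg 1 hx hx1 le_rfl
  rw [show (9:ℕ) = 8+1 from rfl]
  rw [Finset.sum_range_succ, Finset.sum_range_succ, Finset.sum_range_succ,
    Finset.sum_range_succ, Finset.sum_range_succ, Finset.sum_range_succ,
    Finset.sum_range_succ, Finset.sum_range_succ, Finset.sum_range_succ,
    Finset.sum_range_zero]
  norm_num at e0 e2 e3 e4 e5 e6 e7 e8 ⊢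
  linarith

lemma q2_neg {x : ℝ} (hx : 0 < x) (hx1 : x ≤ 1) : q2 x < 0 := by
  have hsum := hasSum_gq hx
  have htail : ∀ n ∉ Finset.range 9, 0 ≤ gq n x := by
    intro n hn
    simp only [Finset.mem_range, not_lt] at hn
    exact gq_nonneg n hx hx1 (by omega)
  have hle := Summable.sum_le_tsum (Finset.range 9) htail hsum.summable
  rw [hsum.tsum_eq] at hle
  have := sum9_pos hx hx1
  unfold q2
  linarith

lemma q_one : q 1 = 0 := by
  unfold q c0 B
  rw [T2_one]
  ring

lemma q_small_pos {d : ℝ} (hd : 0 < d) (hd6 : d ≤ 1/6) : 0 < q d := by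
  have h1 := T2_le hd
  have h2 := T2_nonneg hd
  have h3 := c0_big
  have h4 := B_pos
  have h5 : d ^ 2 * T2 d ≤ (1/36) * (π ^ 2 / 6) := by
    apply mul_le_mul (by nlinarith) h1 h2 (by norm_num)
  unfold q
  nlinarith

lemma deriv_q_eq {x : ℝ} (hx : x ∈ Ioo (0:ℝ) 2) : deriv q x = q1 x := (hasDerivAt_q hx).deriv

lemma deriv2_q_eq {x : ℝ} (hx : x ∈ Ioo (0:ℝ) 2) : deriv^[2] q x = q2 x := by
  have hev : deriv q =ᶠ[nhds x] q1 :=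
    Filter.eventuallyEq_of_mem (isOpen_Ioo.mem_nhds hx) (fun y hy => deriv_q_eq hy)
  have : deriv^[2] q x = deriv (deriv q) x := rfl
  rw [this, hev.deriv_eq]
  exact (hasDerivAt_q1 hx).deriv

lemma q_concave : StrictConcaveOn ℝ (Icc (1/6 : ℝ) 1) q := by
  apply strictConcaveOn_of_deriv2_neg (convex_Icc _ _)
  · intro y hy
    have hy' : y ∈ Ioo (0:ℝ) 2 := ⟨by linarith [hy.1], by linarith [hy.2]⟩
    exact (hasDerivAt_q hy').continuousAt.continuousWithinAt
  · intro y hy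
    rw [interior_Icc] at hy
    have hy' : y ∈ Ioo (0:ℝ) 2 := ⟨by linarith [hy.1], by linarith [hy.2]⟩
    rw [deriv2_q_eq hy']
    exact q2_neg (by linarith [hy.1]) (le_of_lt hy.2)

lemma q_pos {x : ℝ} (hx : 0 < x) (hx1 : x < 1) : 0 < q x := by
  rcases le_or_gt x (1/6) with h | h
  · exact q_small_pos hx h
  · have h16 : (1/6 : ℝ) ∈ Icc (1/6:ℝ) 1 := by constructor <;> norm_num
    have h1 : (1:ℝ) ∈ Icc (1/6:ℝ) 1 := by constructor <;> norm_num
    have hne : (1/6 : ℝ) ≠ 1 := by norm_num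
    set a : ℝ := (1 - x) / (5/6) with ha_def
    set b : ℝ := (x - 1/6) / (5/6) with hb_def
    have ha : 0 < a := div_pos (by linarith) (by norm_num)
    have hb : 0 < b := by
      rw [hb_def]
      apply div_pos (by linarith) (by norm_num)
    have hab : a + b = 1 := by rw [ha_def, hb_def]; field_simp; ring
    have := q_concave.2 h16 h1 hne ha hb hab
    have hcomb : a • (1/6 : ℝ) + b • (1:ℝ) = x := by
      rw [ha_def, hb_def]
      field_simp
      ring
    rw [hcomb] at this
    have hq16 := q_small_pos (by norm_num : (0:ℝ) < 1/6) le_rfl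
    rw [q_one] at this
    calc (0:ℝ) < a • q (1/6) + b • 0 := by
          simp only [smul_eq_mul, mul_zero, add_zero]
          exact mul_pos ha hq16
      _ < q x := this

-- theta chain
noncomputable def th (x : ℝ) : ℝ :=
  B * ((x-1) * Real.log x) + (1 - γ) * Real.log x + γ * x - T0 x
noncomputable def th1 (x : ℝ) : ℝ :=
  B * (Real.log x + (x-1) / x) + (1 - γ) / x + γ - T1 x
noncomputable def th2 (x : ℝ) : ℝ := B / x + c0 / x ^ 2 - T2 x

lemma hasDerivAt_th {x : ℝ} (hx : x ∈ Ioo (0:ℝ) 2) : HasDerivAt th (th1 x) x := by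
  have hx0 : 0 < x := hx.1
  have hlog : HasDerivAt Real.log (1/x) x := by
    simpa [one_div] using Real.hasDerivAt_log hx0.ne'
  have h1 : HasDerivAt (fun y : ℝ => (y - 1) * Real.log y)
      (1 * Real.log x + (x - 1) * (1/x)) x :=
    ((hasDerivAt_id x).sub_const 1).mul hlog
  have h2 : HasDerivAt (fun y : ℝ => B * ((y-1) * Real.log y))
      (B * (1 * Real.log x + (x - 1) * (1/x))) x := h1.const_mul B
  have h3 : HasDerivAt (fun y : ℝ => (1 - γ) * Real.log y) ((1 - γ) * (1/x)) x :=
    hlog.const_mul (1 - γ)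
  have h4 : HasDerivAt (fun y : ℝ => γ * y) γ x := by
    simpa using (hasDerivAt_id x).const_mul γ
  have h5 := ((h2.add h3).add h4).sub (hasDerivAt_T0 hx)
  have heq : th = fun y : ℝ =>
      B * ((y-1) * Real.log y) + (1 - γ) * Real.log y + γ * y - T0 y := rfl
  rw [heq]
  refine h5.congr_deriv ?_
  unfold th1
  field_simp

lemma hasDerivAt_th1 {x : ℝ} (hx : x ∈ Ioo (0:ℝ) 2) : HasDerivAt th1 (th2 x) x := by
  have hx0 : 0 < x := hx.1
  have hlog : HasDerivAt Real.log (1/x) x := by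
    simpa [one_div] using Real.hasDerivAt_log hx0.ne'
  have hinv : HasDerivAt (fun y : ℝ => 1 / y) (-(1/x^2)) x := by
    have h := (hasDerivAt_id x).inv hx0.ne'
    have heqf : (fun y : ℝ => 1 / y) = fun y : ℝ => (y:ℝ)⁻¹ := by
      funext y; rw [one_div]
    rw [heqf, show -(1/x^2) = -1/x^2 by ring]
    exact h
  have h1 : HasDerivAt (fun y : ℝ => (y - 1) / y) (1/x^2) x := by
    have ha : HasDerivAt (fun y : ℝ => 1 - 1 / y) (0 - -(1/x^2)) x :=
      (hasDerivAt_const x 1).sub hinv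
    have heq : (fun y : ℝ => (y - 1) / y) =ᶠ[nhds x] fun y : ℝ => 1 - 1 / y := by
      filter_upwards [isOpen_ne.mem_nhds (show x ≠ (0:ℝ) from hx0.ne')] with y hy
      field_simp
    have := ha.congr_of_eventuallyEq heq
    simpa using this
  have h2 : HasDerivAt (fun y : ℝ => B * (Real.log y + (y-1) / y))
      (B * (1/x + 1/x^2)) x := by
    have := (hlog.add h1).const_mul B
    exact this
  have h3 : HasDerivAt (fun y : ℝ => (1 - γ) / x) 0 x := hasDerivAt_const x _
  have h3' : HasDerivAt (fun y : ℝ => (1 - γ) / y) ((1-γ) * -(1/x^2)) x := by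
    have h := hinv.const_mul (1 - γ)
    have heq2 : (fun y : ℝ => (1 - γ) * (1/y)) = fun y : ℝ => (1 - γ)/y := by
      funext y; rw [mul_one_div]
    rw [← heq2]
    exact h
  have h4 := ((h2.add h3').add_const γ).sub (hasDerivAt_T1 hx)
  have heq : th1 = fun y : ℝ =>
      B * (Real.log y + (y-1) / y) + (1 - γ) / y + γ - T1 y := rfl
  rw [heq]
  refine h4.congr_deriv ?_
  unfold th2 c0
  field_simp
  ring

lemma th_one : th 1 = 0 := by
  unfold th
  rw [T0_one]
  simp

lemma th1_one : th1 1 = 0 := by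
  unfold th1
  rw [T1_one]
  simp

lemma th2_eq_q {x : ℝ} (hx : 0 < x) : th2 x = q x / x ^ 2 := by
  unfold th2 q
  field_simp

lemma th2_pos {x : ℝ} (hx : 0 < x) (hx1 : x < 1) : 0 < th2 x := by
  rw [th2_eq_q hx]
  exact div_pos (q_pos hx hx1) (by positivity)

lemma th1_neg {x : ℝ} (hx : 0 < x) (hx1 : x < 1) : th1 x < 0 := by
  have hmono : StrictMonoOn th1 (Ioc (0:ℝ) 1) := by
    apply strictMonoOn_of_deriv_pos (convex_Ioc 0 1)
    · intro y hy
      exact (hasDerivAt_th1 ⟨hy.1, lt_of_le_of_lt hy.2 one_lt_two⟩).continuousAt.continuousWithinAt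
    · intro y hy
      rw [interior_Ioc] at hy
      rw [(hasDerivAt_th1 ⟨hy.1, lt_trans hy.2 one_lt_two⟩).deriv]
      exact th2_pos hy.1 hy.2
  have := hmono ⟨hx, hx1.le⟩ ⟨one_pos, le_rfl⟩ hx1
  rw [th1_one] at this
  exact this

lemma th_pos {x : ℝ} (hx : 0 < x) (hx1 : x < 1) : 0 < th x := by
  have hanti : StrictAntiOn th (Ioc (0:ℝ) 1) := by
    apply strictAntiOn_of_deriv_neg (convex_Ioc 0 1)
    · intro y hy
      exact (hasDerivAt_th ⟨hy.1, lt_of_le_of_lt hy.2 one_lt_two⟩).continuousAt.continuousWithinAt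
    · intro y hy
      rw [interior_Ioc] at hy
      rw [(hasDerivAt_th ⟨hy.1, lt_trans hy.2 one_lt_two⟩).deriv]
      exact th1_neg hy.1 hy.2
  have := hanti ⟨hx, hx1.le⟩ ⟨one_pos, le_rfl⟩ hx1
  rw [th_one] at this
  exact this

noncomputable def ph (x : ℝ) : ℝ := T0 x - (1 - γ) * (x * Real.log x) - γ * x
noncomputable def ph1 (x : ℝ) : ℝ := T1 x - (1 - γ) * (Real.log x + 1) - γ
noncomputable def ph2 (x : ℝ) : ℝ := T2 x - (1 - γ) / x

lemma hasDerivAt_ph {x : ℝ} (hx : x ∈ Ioo (0:ℝ) 2) : HasDerivAt ph (ph1 x) x := by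
  have hx0 : 0 < x := hx.1
  have hlog : HasDerivAt Real.log (1/x) x := by
    simpa [one_div] using Real.hasDerivAt_log hx0.ne'
  have h1 : HasDerivAt (fun y : ℝ => y * Real.log y) (1 * Real.log x + x * (1/x)) x :=
    (hasDerivAt_id x).mul hlog
  have h2 := (hasDerivAt_T0 hx).sub
    ((h1.const_mul (1 - γ)).add ((hasDerivAt_id x).const_mul γ))
  have heq : ph = fun y : ℝ => T0 y - ((1 - γ) * (y * Real.log y) + γ * y) := by
    funext y; unfold ph; ring
  rw [heq]
  refine h2.congr_deriv ?_
  unfold ph1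
  field_simp
  ring

lemma hasDerivAt_ph1 {x : ℝ} (hx : x ∈ Ioo (0:ℝ) 2) : HasDerivAt ph1 (ph2 x) x := by
  have hx0 : 0 < x := hx.1
  have hlog : HasDerivAt Real.log (1/x) x := by
    simpa [one_div] using Real.hasDerivAt_log hx0.ne'
  have h2 := (hasDerivAt_T1 hx).sub
    (((hlog.add_const 1).const_mul (1 - γ)).add_const γ)
  have heq : ph1 = fun y : ℝ => T1 y - ((1 - γ) * (Real.log y + 1) + γ) := by
    funext y; unfold ph1; ring
  rw [heq]
  refine h2.congr_deriv ?_
  unfold ph2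
  field_simp

lemma ph_one : ph 1 = 0 := by
  unfold ph
  rw [T0_one]
  simp

lemma ph1_one : ph1 1 = 0 := by
  unfold ph1
  rw [T1_one]
  simp

lemma ph2_eq_w {x : ℝ} (hx : 0 < x) : ph2 x = w x / x := by
  unfold ph2 w
  field_simp

-- the critical point
lemma exists_ccrit : ∃ c ∈ Ioo (1/5 : ℝ) 1, w c = 0 := by
  have hcont : ContinuousOn w (Icc (1/5 : ℝ) 1) := by
    intro y hy
    have hy' : y ∈ Ioo (0:ℝ) 2 := ⟨by linarith [hy.1], by linarith [hy.2]⟩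
    exact (hasDerivAt_w hy').continuousAt.continuousWithinAt
  have := intermediate_value_Ioo (by norm_num : (1/5:ℝ) ≤ 1) hcont
  have hmem : (0:ℝ) ∈ Ioo (w (1/5)) (w 1) := ⟨w_fifth_neg, w_one_pos⟩
  obtain ⟨c, hc, hc0⟩ := this hmem
  exact ⟨c, hc, hc0⟩

lemma ph_pos_right {c : ℝ} (hc : c ∈ Ioo (1/5 : ℝ) 1) (hwc : w c = 0)
    {x : ℝ} (hx : c ≤ x) (hx1 : x < 1) : 0 < ph x := by
  have hc0 : 0 < c := by linarith [hc.1]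
  -- w > 0 on (c, 1]
  have hwpos : ∀ y, c < y → y ≤ 1 → 0 < w y := by
    intro y hy hy1
    have := w_strictMono ⟨hc0, by linarith [hc.2]⟩ ⟨by linarith, hy1⟩ hy
    rw [hwc] at this
    exact this
  -- ph1 strictly increasing on Icc c 1
  have hmono : StrictMonoOn ph1 (Icc c 1) := by
    apply strictMonoOn_of_deriv_pos (convex_Icc c 1)
    · intro y hy
      have hy' : y ∈ Ioo (0:ℝ) 2 := ⟨by linarith [hy.1], by linarith [hy.2]⟩
      exact (hasDerivAt_ph1 hy').continuousAt.continuousWithinAt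
    · intro y hy
      rw [interior_Icc] at hy
      have hy0 : 0 < y := by linarith [hy.1]
      rw [(hasDerivAt_ph1 ⟨hy0, by linarith [hy.2]⟩).deriv, ph2_eq_w hy0]
      exact div_pos (hwpos y hy.1 hy.2.le) hy0
  have hph1neg : ∀ y, c ≤ y → y < 1 → ph1 y < 0 := by
    intro y hy hy1
    have := hmono ⟨hy, hy1.le⟩ ⟨by linarith, le_rfl⟩ hy1
    rw [ph1_one] at this
    exact this
  have hanti : StrictAntiOn ph (Icc c 1) := by
    apply strictAntiOn_of_deriv_neg (convex_Icc c 1)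
    · intro y hy
      have hy' : y ∈ Ioo (0:ℝ) 2 := ⟨by linarith [hy.1], by linarith [hy.2]⟩
      exact (hasDerivAt_ph hy').continuousAt.continuousWithinAt
    · intro y hy
      rw [interior_Icc] at hy
      have hy0 : 0 < y := by linarith [hy.1]
      rw [(hasDerivAt_ph ⟨hy0, by linarith [hy.2]⟩).deriv]
      exact hph1neg y hy.1.le hy.2
  have := hanti ⟨hx, hx1.le⟩ ⟨by linarith, le_rfl⟩ hx1
  rw [ph_one] at this
  exact this

lemma exp_two_lt_eight : Real.exp 2 < 8 := by
  have h := Real.exp_one_lt_d9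
  have : Real.exp 2 = Real.exp 1 * Real.exp 1 := by
    rw [← Real.exp_add]; norm_num
  rw [this]
  nlinarith [Real.exp_pos 1]

lemma ph_small_pos {d : ℝ} (hd : 0 < d) (hd8 : d ≤ 1/8) : 0 < ph d := by
  have hT0 := T0_nonneg hd.le
  have hlog : Real.log d ≤ -2 := by
    have h1 : Real.log d ≤ Real.log (1/8) := Real.log_le_log hd hd8
    have h2 : Real.log (1/8 : ℝ) < -2 := by
      have h8 : (2:ℝ) < Real.log 8 :=
        (Real.lt_log_iff_exp_lt (by norm_num : (0:ℝ) < 8)).mpr exp_two_lt_eight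
      rw [show (1/8 : ℝ) = 8⁻¹ by norm_num, Real.log_inv]
      linarith
    linarith
  have hg1 := gamma_gt
  have hg2 := gamma_lt
  have key : 0 < d * ((1 - γ) * (- Real.log d) - γ) := by
    apply mul_pos hd
    nlinarith
  unfold ph
  nlinarith

lemma ph_pos {c : ℝ} (hc : c ∈ Ioo (1/5 : ℝ) 1) (hwc : w c = 0)
    {x : ℝ} (hx : 0 < x) (hxc : x < c) : 0 < ph x := by
  rcases le_or_gt x (1/8) with h8 | h8
  · exact ph_small_pos hx h8
  · -- concave on Icc (1/8) c
    have hc0 : (0:ℝ) < 1/8 := by norm_num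
    have hcc : (1/8 : ℝ) < c := by linarith [hc.1]
    have hwneg : ∀ y, 0 < y → y < c → w y < 0 := by
      intro y hy hyc
      have := w_strictMono ⟨hy, by nlinarith [hc.2]⟩ ⟨by linarith [hc.1], hc.2.le⟩ hyc
      rw [hwc] at this
      linarith
    have hconc : ConcaveOn ℝ (Icc (1/8 : ℝ) c) ph := by
      apply concaveOn_of_deriv2_nonpos (convex_Icc _ _)
      · intro y hy
        have hy' : y ∈ Ioo (0:ℝ) 2 := ⟨by linarith [hy.1], by nlinarith [hy.2, hc.2]⟩
        exact (hasDerivAt_ph hy').continuousAt.continuousWithinAt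
      · intro y hy
        rw [interior_Icc] at hy
        have hy' : y ∈ Ioo (0:ℝ) 2 := ⟨by linarith [hy.1], by nlinarith [hy.2, hc.2]⟩
        exact (hasDerivAt_ph hy').differentiableAt.differentiableWithinAt
      · intro y hy
        rw [interior_Icc] at hy
        have hy' : y ∈ Ioo (0:ℝ) 2 := ⟨by linarith [hy.1], by nlinarith [hy.2, hc.2]⟩
        have hev : deriv ph =ᶠ[nhds y] ph1 :=
          Filter.eventuallyEq_of_mem (isOpen_Ioo.mem_nhds hy')
            (fun z hz => (hasDerivAt_ph hz).deriv)
        exact ((hev.differentiableAt_iff).mpr (hasDerivAt_ph1 hy').differentiableAt).differentiableWithinAt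
      · intro y hy
        rw [interior_Icc] at hy
        have hy0 : 0 < y := by linarith [hy.1]
        have hy' : y ∈ Ioo (0:ℝ) 2 := ⟨hy0, by nlinarith [hy.2, hc.2]⟩
        have hev : deriv ph =ᶠ[nhds y] ph1 :=
          Filter.eventuallyEq_of_mem (isOpen_Ioo.mem_nhds hy')
            (fun z hz => (hasDerivAt_ph hz).deriv)
        have : deriv^[2] ph y = deriv (deriv ph) y := rfl
        rw [this, hev.deriv_eq, (hasDerivAt_ph1 hy').deriv, ph2_eq_w hy0]
        apply div_nonpos_of_nonpos_of_nonneg _ hy0.le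
        exact (hwneg y hy0 hy.2).le
    set a : ℝ := (c - x) / (c - 1/8) with ha_def
    set b : ℝ := (x - 1/8) / (c - 1/8) with hb_def
    have ha : 0 ≤ a := le_of_lt (div_pos (by linarith) (by linarith))
    have hb : 0 ≤ b := le_of_lt (div_pos (by linarith) (by linarith))
    have hden : c - 1/8 ≠ 0 := by linarith
    have hab : a + b = 1 := by
      rw [ha_def, hb_def, ← add_div, div_eq_one_iff_eq hden]
      ring
    have hmem1 : (1/8 : ℝ) ∈ Icc (1/8:ℝ) c := ⟨le_rfl, hcc.le⟩
    have hmem2 : c ∈ Icc (1/8:ℝ) c := ⟨hcc.le, le_rfl⟩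
    have hcomb := hconc.2 hmem1 hmem2 ha hb hab
    have hxeq : a • (1/8 : ℝ) + b • c = x := by
      simp only [smul_eq_mul, ha_def, hb_def]
      rw [div_mul_eq_mul_div, div_mul_eq_mul_div, ← add_div, div_eq_iff hden]
      ring
    rw [hxeq] at hcomb
    have h18 : 0 < ph (1/8 : ℝ) := ph_small_pos (by norm_num) le_rfl
    have hphc : 0 < ph c := ph_pos_right hc hwc le_rfl hc.2
    have hab' : 0 < a ∨ 0 < b := by
      left; exact div_pos (by linarith) (by linarith)
    calc (0:ℝ) < a • ph (1/8) + b • ph c := by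
          rcases lt_or_eq_of_le ha with ha' | ha'
          · have : 0 ≤ b • ph c := smul_nonneg hb hphc.le
            have := smul_pos ha' h18
            simp only [smul_eq_mul] at *
            nlinarith
          · exfalso
            have : a = 0 := ha'.symm
            rw [ha_def] at this
            have := div_eq_zero_iff.mp this
            rcases this with h | h
            · linarith
            · linarith
      _ ≤ ph x := hcomb

lemma ph_pos_aux {x : ℝ} (hx : 0 < x) (hx1 : x < 1) : 0 < ph x := by
  obtain ⟨c, hc, hwc⟩ := exists_ccrit
  rcases lt_or_ge x c with h | h
  · exact ph_pos hc hwc hx h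
  · exact ph_pos_right hc hwc h hx1

lemma logGamma_eq {x : ℝ} (hx : 0 < x) :
    Real.log (Real.Gamma x) = T0 x - Real.log x - γ * x := by
  rw [T0_eq hx]; ring

lemma main_lower {x : ℝ} (hx : 0 < x) (hx1 : x < 1) :
    x ^ ((1 - γ) * (x - 1) - γ) < Real.Gamma x := by
  have hG : 0 < Real.Gamma x := Real.Gamma_pos_of_pos hx
  rw [Real.rpow_def_of_pos hx, ← Real.exp_log hG]
  apply Real.exp_lt_exp.mpr
  have hph := ph_pos_aux hx hx1
  have hkey : Real.log (Real.Gamma x) - Real.log x * ((1 - γ) * (x - 1) - γ) = ph x := by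
    rw [logGamma_eq hx]
    unfold ph
    ring
  linarith

lemma main_upper {x : ℝ} (hx : 0 < x) (hx1 : x < 1) :
    Real.Gamma x < x ^ (B * (x - 1) - γ) := by
  have hG : 0 < Real.Gamma x := Real.Gamma_pos_of_pos hx
  rw [Real.rpow_def_of_pos hx, ← Real.exp_log hG]
  apply Real.exp_lt_exp.mpr
  have hth := th_pos hx hx1
  have hkey : Real.log x * (B * (x - 1) - γ) - Real.log (Real.Gamma x) = th x := by
    rw [logGamma_eq hx]
    unfold th
    ring
  linarith

lemma alpha_opt {α : ℝ}
    (h : ∀ x ∈ Set.Ioo (0:ℝ) 1, x ^ (α * (x - 1) - γ) < Real.Gamma x) :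
    α ≤ 1 - γ := by
  have key : ∀ x ∈ Set.Ioo (0:ℝ) (1/2), α ≤ 3 * x^2 + (1 - γ) + α * x := by
    intro x hx
    obtain ⟨hx0, hx2⟩ := hx
    have hx1 : x < 1 := by linarith
    have hG : 0 < Real.Gamma x := Real.Gamma_pos_of_pos hx0
    have h1 := h x ⟨hx0, hx1⟩
    rw [Real.rpow_def_of_pos hx0, ← Real.exp_log hG] at h1
    have h2 : Real.log x * (α * (x - 1) - γ) < Real.log (Real.Gamma x) :=
      Real.exp_lt_exp.mp h1
    rw [logGamma_eq hx0] at h2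
    -- L = -log x
    set L : ℝ := -Real.log x with hL_def
    have hlogneg : Real.log x < 0 := Real.log_neg hx0 hx1
    have hL : 0 < L := by rw [hL_def]; linarith
    have hL2 : Real.log 2 ≤ L := by
      rw [hL_def]
      have : Real.log x ≤ Real.log (1/2) := Real.log_le_log hx0 hx2.le
      rw [show (1/2 : ℝ) = 2⁻¹ by norm_num, Real.log_inv] at this
      linarith
    have hlog2 : (0.6931471803 : ℝ) < Real.log 2 := Real.log_two_gt_d9
    have hT0le := T0_le hx0.le
    have hpi := pisq_ub
    -- α (1-x) L < x² π²/6 + (1-γ) L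
    have hg1 := gamma_gt
    have hgx : 0 ≤ γ * x := mul_nonneg (by linarith) hx0.le
    have h3 : α * ((1-x) * L) < x^2 * (π^2/6) + (1-γ) * L := by nlinarith [h2, hT0le]
    have h4 : x^2 * (π^2/6) ≤ x^2 * (3*L) :=
      mul_le_mul_of_nonneg_left (by nlinarith) (sq_nonneg x)
    have h5' : (α * (1-x)) * L < (3 * x^2 + (1-γ)) * L := by nlinarith [h3, h4]
    have h6 : α * (1-x) < 3 * x^2 + (1-γ) := (mul_lt_mul_iff_left₀ hL).mp h5'
    nlinarith [h6]
  have htend : Tendsto (fun x : ℝ => 3 * x^2 + (1 - γ) + α * x) (nhdsWithin 0 (Set.Ioi 0))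
      (nhds (1 - γ)) := by
    have hc : Continuous (fun x : ℝ => 3 * x^2 + (1 - γ) + α * x) := by continuity
    have ht := hc.tendsto 0
    have h0 : 3 * (0:ℝ)^2 + (1 - γ) + α * 0 = 1 - γ := by norm_num
    rw [h0] at ht
    exact ht.mono_left nhdsWithin_le_nhds
  refine ge_of_tendsto htend ?_
  filter_upwards [Ioo_mem_nhdsGT_of_mem (by norm_num : (0:ℝ) ∈ Set.Ico (0:ℝ) (1/2))] with x hx
  exact key x hx

lemma beta_opt {β : ℝ}
    (h : ∀ x ∈ Set.Ioo (0:ℝ) 1, Real.Gamma x < x ^ (β * (x - 1) - γ)) :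
    B ≤ β := by
  have key : ∀ x ∈ Set.Ioo (0:ℝ) 1, B - β < B / x + c0 / x^2 - T2 1 := by
    intro x hx
    obtain ⟨hx0, hx1⟩ := hx
    have hG : 0 < Real.Gamma x := Real.Gamma_pos_of_pos hx0
    have h1 := h x ⟨hx0, hx1⟩
    rw [Real.rpow_def_of_pos hx0, ← Real.exp_log hG] at h1
    have h2 : Real.log (Real.Gamma x) < Real.log x * (β * (x - 1) - γ) :=
      Real.exp_lt_exp.mp h1
    rw [logGamma_eq hx0] at h2
    have hth : (B - β) * ((x-1) * Real.log x) < th x := by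
      unfold th
      nlinarith [h2]
    -- MVT twice
    obtain ⟨ξ, hξ, hslope1⟩ := exists_hasDerivAt_eq_slope th th1 hx1
      (fun y hy => (hasDerivAt_th ⟨lt_of_lt_of_le hx0 hy.1,
        lt_of_le_of_lt hy.2 one_lt_two⟩).continuousAt.continuousWithinAt)
      (fun y hy => hasDerivAt_th ⟨lt_trans hx0 hy.1, lt_trans hy.2 one_lt_two⟩)
    obtain ⟨η, hη, hslope2⟩ := exists_hasDerivAt_eq_slope th1 th2 hξ.2
      (fun y hy => (hasDerivAt_th1 ⟨lt_of_lt_of_le (lt_trans hx0 hξ.1) hy.1,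
        lt_of_le_of_lt hy.2 one_lt_two⟩).continuousAt.continuousWithinAt)
      (fun y hy => hasDerivAt_th1 ⟨lt_trans (lt_trans hx0 hξ.1) hy.1,
        lt_trans hy.2 one_lt_two⟩)
    rw [th_one] at hslope1
    rw [th1_one] at hslope2
    have hξ0 : 0 < ξ := lt_trans hx0 hξ.1
    have hη0 : 0 < η := lt_trans hξ0 hη.1
    have hηx : x < η := lt_trans hξ.1 hη.1
    have hη1 : η < 1 := hη.2
    have hthx : th x = (1 - x) * ((1 - ξ) * th2 η) := by
      have hne1 : (1:ℝ) - x ≠ 0 := by linarith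
      have hne2 : (1:ℝ) - ξ ≠ 0 := by linarith [hξ.2]
      have e1 : th1 ξ * (1 - x) = 0 - th x := (eq_div_iff hne1).mp hslope1
      have e2 : th2 η * (1 - ξ) = 0 - th1 ξ := (eq_div_iff hne2).mp hslope2
      linear_combination e1 - (1 - x) * e2
    have hth2η : 0 < th2 η := th2_pos hη0 hη1
    have hth2M : th2 η ≤ B / x + c0 / x^2 - T2 1 := by
      unfold th2
      have hBd : B / η ≤ B / x := by
        apply div_le_div_of_nonneg_left B_pos.le hx0 hηx.le
      have hcd : c0 / η^2 ≤ c0 / x^2 := by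
        apply div_le_div_of_nonneg_left c0_pos.le (by positivity) ?_
        nlinarith
      have hT2d : T2 1 ≤ T2 η := T2_mono hη0 hη1.le
      linarith
    have hM0 : 0 ≤ B / x + c0 / x^2 - T2 1 := le_trans hth2η.le hth2M
    have hD : (1-x)^2 ≤ (x - 1) * Real.log x := by
      have hlx : Real.log x ≤ x - 1 := by
        have := Real.log_le_sub_one_of_pos hx0
        linarith
      nlinarith
    have hD0 : 0 < (x - 1) * Real.log x := by
      have hlogneg : Real.log x < 0 := Real.log_neg hx0 hx1
      have : x - 1 < 0 := by linarith
      exact mul_pos_of_neg_of_neg this hlogneg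
    have hthle : th x ≤ (1-x)^2 * (B / x + c0 / x^2 - T2 1) := by
      rw [hthx]
      have h1ξ : 0 ≤ 1 - ξ := by linarith [hξ.2]
      have h1x : 0 ≤ 1 - x := by linarith
      have hstep : (1 - ξ) * th2 η ≤ (1 - x) * (B / x + c0 / x^2 - T2 1) := by
        apply mul_le_mul (by linarith [hξ.1]) hth2M hth2η.le h1x
      nlinarith
    have hfinal : (B - β) * ((x-1) * Real.log x)
        < (B / x + c0 / x^2 - T2 1) * ((x-1) * Real.log x) := by
      calc (B - β) * ((x-1) * Real.log x) < th x := hth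
        _ ≤ (1-x)^2 * (B / x + c0 / x^2 - T2 1) := hthle
        _ ≤ (B / x + c0 / x^2 - T2 1) * ((x-1) * Real.log x) := by nlinarith
    exact lt_of_mul_lt_mul_right (by linarith [hfinal]) hD0.le
  have hzero : B + c0 - T2 1 = 0 := by
    have := q_one
    unfold q at this
    nlinarith [this]
  have htend : Tendsto (fun x : ℝ => B / x + c0 / x^2 - T2 1) (nhdsWithin 1 (Set.Iio 1))
      (nhds 0) := by
    have hc : ContinuousAt (fun x : ℝ => B / x + c0 / x^2 - T2 1) 1 := by
      apply ContinuousAt.sub _ continuousAt_const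
      apply ContinuousAt.add
      · exact (continuousAt_const.div continuousAt_id one_ne_zero)
      · exact (continuousAt_const.div (continuousAt_id.pow 2) (by norm_num))
    have ht := hc.tendsto
    have h0 : B / (1:ℝ) + c0 / (1:ℝ)^2 - T2 1 = 0 := by
      simp only [one_pow, div_one]
      linarith [hzero]
    rw [h0] at ht
    exact ht.mono_left nhdsWithin_le_nhds
  have hle : B - β ≤ 0 := by
    refine ge_of_tendsto htend ?_
    filter_upwards [Ioo_mem_nhdsLT_of_mem (by norm_num : (1:ℝ) ∈ Set.Ioc (0:ℝ) 1)] with x hx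
    exact (key x hx).le
  linarith

end AlzerAux

open Real Set

theorem alzer_gamma_bounds :
    (∀ x ∈ Set.Ioo (0 : ℝ) 1,
      x ^ ((1 - Real.eulerMascheroniConstant) * (x - 1) - Real.eulerMascheroniConstant)
        < Real.Gamma x ∧
      Real.Gamma x <
        x ^ ((π ^ 2 / 6 - Real.eulerMascheroniConstant) / 2 * (x - 1)
              - Real.eulerMascheroniConstant)) ∧
    (∀ α : ℝ,
      (∀ x ∈ Set.Ioo (0 : ℝ) 1,
        x ^ (α * (x - 1) - Real.eulerMascheroniConstant) < Real.Gamma x) →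
      α ≤ 1 - Real.eulerMascheroniConstant) ∧
    (∀ β : ℝ,
      (∀ x ∈ Set.Ioo (0 : ℝ) 1,
        Real.Gamma x < x ^ (β * (x - 1) - Real.eulerMascheroniConstant)) →
      (π ^ 2 / 6 - Real.eulerMascheroniConstant) / 2 ≤ β) := by
  refine ⟨?_, ?_, ?_⟩
  · intro x hx
    refine ⟨AlzerAux.main_lower hx.1 hx.2, ?_⟩
    have := AlzerAux.main_upper hx.1 hx.2
    simpa only [AlzerAux.B] using this
  · intro α hα
    exact AlzerAux.alpha_opt hα
  · intro β hβ
    have := AlzerAux.beta_opt hβ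
    simpa only [AlzerAux.B] using this
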